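/- A 2-agent 2×n general-sum game is positive semi-definite if and only if u_r + u_c = 0 in ℝ^{n−1}. -/

import Mathlib

/- Common framework for 2-agent m×n general-sum normal-form games
   (parametrized so the game has (m+1) × (n+1) actions and independent
   strategy coordinates live in ℝ^m and ℝ^n). -/

open Matrix Filter Topology
open scoped RealInnerProductSpace

noncomputable section

/-- Strategy space carrier: ℝ^m with the Euclidean structure. -/
abbrev Str (m : ℕ) := EuclideanSpace ℝ (Fin m)

/-- The valid strategy set Δ = {x : xᵢ ≥ 0, ∑ xᵢ ≤ 1}. -/
def simplexSet (m : ℕ) : Set (Str m) := {x | (∀ i, 0 ≤ x i) ∧ ∑ i, x i ≤ 1}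

/-- α̃ = (α ; 1 − eᵀα). -/
def tilde {m : ℕ} (x : Str m) : Fin (m + 1) → ℝ :=
  Fin.snoc (fun i => x i) (1 - ∑ i, x i)

/-- Row player's expected payoff V_r(α, β) = α̃ᵀ R β̃. -/
def Vr {m n : ℕ} (R : Matrix (Fin (m + 1)) (Fin (n + 1)) ℝ) (α : Str m) (β : Str n) : ℝ :=
  tilde α ⬝ᵥ (R *ᵥ tilde β)

/-- Column player's expected payoff V_c(α, β) = α̃ᵀ C β̃. -/
def Vc {m n : ℕ} (C : Matrix (Fin (m + 1)) (Fin (n + 1)) ℝ) (α : Str m) (β : Str n) : ℝ :=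
  tilde α ⬝ᵥ (C *ᵥ tilde β)

/-- ∂_α V_r(α, β) (gradient of the affine map α ↦ V_r(α, β)). -/
def gradR {m n : ℕ} (R : Matrix (Fin (m + 1)) (Fin (n + 1)) ℝ) (β : Str n) : Str m :=
  (WithLp.equiv 2 _).symm fun i : Fin m =>
    (R *ᵥ tilde β) i.castSucc - (R *ᵥ tilde β) (Fin.last m)

/-- ∂_β V_c(α, β) (gradient of the affine map β ↦ V_c(α, β)). -/
def gradC {m n : ℕ} (C : Matrix (Fin (m + 1)) (Fin (n + 1)) ℝ) (α : Str m) : Str n :=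
  (WithLp.equiv 2 _).symm fun j : Fin n =>
    (Cᵀ *ᵥ tilde α) j.castSucc - (Cᵀ *ᵥ tilde α) (Fin.last n)

/-- (α, β) is a Nash equilibrium. -/
def IsNash {m n : ℕ} (R C : Matrix (Fin (m + 1)) (Fin (n + 1)) ℝ)
    (α : Str m) (β : Str n) : Prop :=
  α ∈ simplexSet m ∧ β ∈ simplexSet n ∧
    (∀ α' ∈ simplexSet m, Vr R α' β ≤ Vr R α β) ∧
    (∀ β' ∈ simplexSet n, Vc C α β' ≤ Vc C α β)

/-- `P` is the Euclidean nearest-point projection onto `Δ`. -/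
def IsProjOn {m : ℕ} (Δ : Set (Str m)) (P : Str m → Str m) : Prop :=
  ∀ x, P x ∈ Δ ∧ ∀ z ∈ Δ, dist x (P x) ≤ dist x z

/-- δ = max entry − min entry of a payoff matrix. -/
def matSpread {m n : ℕ} (M : Matrix (Fin (m + 1)) (Fin (n + 1)) ℝ) : ℝ :=
  (Finset.univ.sup' Finset.univ_nonempty fun p : Fin (m + 1) × Fin (n + 1) => M p.1 p.2)
  - (Finset.univ.inf' Finset.univ_nonempty fun p : Fin (m + 1) × Fin (n + 1) => M p.1 p.2)

/-- Conditions 1–3 on the initial prediction length γ₀ and the step size η. -/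
def Conds {m n : ℕ} (R C : Matrix (Fin (m + 1)) (Fin (n + 1)) ℝ) (γ₀ η : ℝ) : Prop :=
  0 < γ₀ ∧ 0 < η ∧
  4 * γ₀ ^ 2 * matSpread R * matSpread C < 1 ∧
  η < 1 / (matSpread R + matSpread C) ∧ γ₀ < 1 / (matSpread R + matSpread C)

/-- Both agents follow GA-SPP: `a`,`b` are the strategies, `abar`,`bbar` the
predictions, `γ` the prediction lengths, `η` the step size, `P₁`,`P₂` the
projections onto the respective simplices. -/
def GASPPRun {m n : ℕ} (R C : Matrix (Fin (m + 1)) (Fin (n + 1)) ℝ)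
    (P₁ : Str m → Str m) (P₂ : Str n → Str n) (η : ℝ) (γ : ℕ → ℝ)
    (a abar : ℕ → Str m) (b bbar : ℕ → Str n) : Prop :=
  ∀ k : ℕ,
    abar (k + 1) = P₁ (a k + γ k • gradR R (b k)) ∧
    bbar (k + 1) = P₂ (b k + γ k • gradC C (a k)) ∧
    ((abar (k + 1) = a k ∧ bbar (k + 1) = b k) →
        a (k + 1) = a k ∧ b (k + 1) = b k ∧ γ (k + 1) = γ k) ∧
    (¬(abar (k + 1) = a k ∧ bbar (k + 1) = b k) →
        a (k + 1) = P₁ (a k + η • gradR R (bbar (k + 1))) ∧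
        b (k + 1) = P₂ (b k + η • gradC C (abar (k + 1))) ∧
        ((a (k + 1) = a k ∧ b (k + 1) = b k) →
            ∃ μ : ℝ, 0 < μ ∧ μ < 1 ∧ γ (k + 1) = μ * γ k) ∧
        (¬(a (k + 1) = a k ∧ b (k + 1) = b k) → γ (k + 1) = γ k))

/-- The row agent follows GA-SPP while the column agent follows basic
gradient ascent (GA), based on the opponent's current strategy. -/
def GASPPvsGARun {m n : ℕ} (R C : Matrix (Fin (m + 1)) (Fin (n + 1)) ℝ)
    (P₁ : Str m → Str m) (P₂ : Str n → Str n) (η : ℝ) (γ : ℕ → ℝ)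
    (a abar : ℕ → Str m) (b bbar : ℕ → Str n) : Prop :=
  ∀ k : ℕ,
    abar (k + 1) = P₁ (a k + γ k • gradR R (b k)) ∧
    bbar (k + 1) = P₂ (b k + γ k • gradC C (a k)) ∧
    ((abar (k + 1) = a k ∧ bbar (k + 1) = b k) →
        a (k + 1) = a k ∧ b (k + 1) = b k ∧ γ (k + 1) = γ k) ∧
    (¬(abar (k + 1) = a k ∧ bbar (k + 1) = b k) →
        a (k + 1) = P₁ (a k + η • gradR R (bbar (k + 1))) ∧
        b (k + 1) = P₂ (b k + η • gradC C (a k)) ∧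
        ((a (k + 1) = a k ∧ b (k + 1) = b k) →
            ∃ μ : ℝ, 0 < μ ∧ μ < 1 ∧ γ (k + 1) = μ * γ k) ∧
        (¬(a (k + 1) = a k ∧ b (k + 1) = b k) → γ (k + 1) = γ k))

/-- The normalized value function Φ(v, w) = V_r(α¹, β²) + V_c(α², β¹),
for v = (α¹, β¹), w = (α², β²). -/
def Phi {m n : ℕ} (R C : Matrix (Fin (m + 1)) (Fin (n + 1)) ℝ)
    (v w : Str m × Str n) : ℝ :=
  Vr R v.1 w.2 + Vc C w.1 v.2

/-- Positive semi-definite game. -/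
def IsPSD {m n : ℕ} (R C : Matrix (Fin (m + 1)) (Fin (n + 1)) ℝ) : Prop :=
  ∀ v w : Str m × Str n, v.1 ∈ simplexSet m → v.2 ∈ simplexSet n →
    w.1 ∈ simplexSet m → w.2 ∈ simplexSet n →
    0 ≤ Phi R C w w - Phi R C w v - Phi R C v w + Phi R C v v

/-- u_r = r₁ − r₂ − b_r e for a 2×(n+1) game. -/
def uR {n : ℕ} (R : Matrix (Fin 2) (Fin (n + 1)) ℝ) : Fin n → ℝ := fun j =>
  R 0 j.castSucc - R 1 j.castSucc - (R 0 (Fin.last n) - R 1 (Fin.last n))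

/-- u_c = c₁ − c₂ − (c_{1n} − c_{2n}) e for a 2×(n+1) game. -/
def uC {n : ℕ} (C : Matrix (Fin 2) (Fin (n + 1)) ℝ) : Fin n → ℝ := fun j =>
  C 0 j.castSucc - C 1 j.castSucc - (C 0 (Fin.last n) - C 1 (Fin.last n))

end

noncomputable section Aux

lemma Vr_formula {n : ℕ} (R : Matrix (Fin 2) (Fin (n + 1)) ℝ) (α : Str 1) (β : Str n) :
    Vr R α β =
      α 0 * (∑ j : Fin n, R 0 j.castSucc * β j + R 0 (Fin.last n) * (1 - ∑ j, β j))
      + (1 - α 0) * (∑ j : Fin n, R 1 j.castSucc * β j + R 1 (Fin.last n) * (1 - ∑ j, β j)) := by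
  have hl : (Fin.last 1) = 1 := rfl
  simp [Vr, tilde, dotProduct, Matrix.mulVec, Fin.sum_univ_two, Fin.sum_univ_castSucc,
    Fin.sum_univ_one, Fin.snoc, hl, Finset.mul_sum, Finset.sum_mul]

lemma key {n : ℕ} (R C : Matrix (Fin 2) (Fin (n + 1)) ℝ) (v w : Str 1 × Str n) :
    Phi R C w w - Phi R C w v - Phi R C v w + Phi R C v v
      = (w.1 0 - v.1 0) * ∑ j : Fin n, (uR R j + uC C j) * (w.2 j - v.2 j) := by
  have hc : ∀ (α : Str 1) (β : Str n), Vc C α β =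
      α 0 * (∑ j : Fin n, C 0 j.castSucc * β j + C 0 (Fin.last n) * (1 - ∑ j, β j))
      + (1 - α 0) * (∑ j : Fin n, C 1 j.castSucc * β j + C 1 (Fin.last n) * (1 - ∑ j, β j)) := by
    intro α β; exact Vr_formula C α β
  simp only [Phi, Vr_formula, hc, uR, uC]
  simp only [Finset.mul_sum, mul_sub, sub_mul, add_mul, Finset.sum_sub_distrib,
    Finset.sum_add_distrib]
  ring

end Aux


/-- a 2×n general-sum game is positive semi-definite if and
only if u_r + u_c = 0 in ℝ^{n-1}. -/
theorem stmt15 {n : ℕ} (R C : Matrix (Fin 2) (Fin (n + 1)) ℝ) :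
    IsPSD (m := 1) R C ↔ ∀ j : Fin n, uR R j + uC C j = 0 := by
  constructor
  · intro h j
    let e : Str n := WithLp.toLp 2 (fun i => if i = j then (1:ℝ) else 0)
    have heS : e ∈ simplexSet n := by
      constructor
      · intro i; show (0:ℝ) ≤ if i = j then 1 else 0; split <;> norm_num
      · show (∑ i : Fin n, if i = j then (1:ℝ) else 0) ≤ 1
        simp [Finset.sum_ite_eq']
    have h0 : (0 : Str n) ∈ simplexSet n := ⟨fun i => le_refl 0, by simp [show ∀ i : Fin n, (0:Str n) i = 0 from fun _ => rfl]⟩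
    have hone : (WithLp.toLp 2 (fun _ => (1:ℝ)) : Str 1) ∈ simplexSet 1 := by
      constructor
      · intro i; norm_num
      · simp
    have hz : (0 : Str 1) ∈ simplexSet 1 := ⟨fun i => le_refl 0, by simp [show ((0:Str 1) 0 : ℝ) = 0 from rfl]⟩
    have h1 := h ((0 : Str 1), (0 : Str n)) ((WithLp.toLp 2 (fun _ => (1:ℝ)) : Str 1), e) hz h0 hone heS
    have h2 := h ((WithLp.toLp 2 (fun _ => (1:ℝ)) : Str 1), (0 : Str n)) ((0 : Str 1), e) hone h0 hz heS
    rw [key] at h1 h2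
    have hsimp : ∑ j' : Fin n, (uR R j' + uC C j') * (e j' - (0 : Str n) j')
        = uR R j + uC C j := by
      show ∑ j' : Fin n, (uR R j' + uC C j') * ((if j' = j then (1:ℝ) else 0) - 0) = _
      simp [Finset.sum_ite_eq', mul_ite]
    have hz0 : ((0 : Str 1) 0 : ℝ) = 0 := rfl
    simp only [hsimp, hz0] at h1 h2
    norm_num at h1 h2
    linarith
  · intro h v w _ _ _ _
    rw [key R C v w]
    simp [h]
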